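/- Let $V$ be the vertical concatenation of two generic $m\times n$ matrices $X$ and $Y$, and let $b > 2$. Then every $b \times b$ minor of $V$ lies in the ideal $I_2(H)$ generated by the $2\times 2$ minors of the horizontal concatenation $H = [X \; Y]$. Consequently, $I_2(H) + I_b(V) = I_2(H)$. -/

import Mathlib

set_option maxHeartbeats 1000000
set_option synthInstance.maxHeartbeats 400000


/-- The ideal generated by all 2×2 minors of a matrix. -/
def minors2 {R : Type*} [CommRing R] {α β : Type*} (M : Matrix α β R) : Ideal R :=
  Ideal.span { p | ∃ i i' j j', p = M i j * M i' j' - M i j' * M i' j }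

/-- The ideal generated by all `b × b` minors of a matrix. -/
def minorsIdeal {R : Type*} [CommRing R] {α β : Type*} (b : ℕ) (M : Matrix α β R) :
    Ideal R :=
  Ideal.span { p | ∃ (rows : Fin b → α) (cols : Fin b → β),
    Function.Injective rows ∧ Function.Injective cols ∧
      p = (M.submatrix rows cols).det }

/-- For the vertical concatenation `V` of two generic `m × n` matrices and `b > 2`,
every `b × b` minor of `V` lies in the ideal of 2×2 minors of the horizontal
concatenation `H`; consequently `I₂(H) + I_b(V) = I₂(H)`. -/
theorem minors_b_subset_minors2_H (k : Type*) [Field k] (m n b : ℕ)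
    (hm : 2 ≤ m) (hn : 2 ≤ n) (hb : 2 < b)
    (H : Matrix (Fin m) (Fin 2 × Fin n) (MvPolynomial (Fin 2 × Fin m × Fin n) k))
    (V : Matrix (Fin 2 × Fin m) (Fin n) (MvPolynomial (Fin 2 × Fin m × Fin n) k))
    (hH : ∀ i q, H i q = MvPolynomial.X (q.1, i, q.2))
    (hV : ∀ p j, V p j = MvPolynomial.X (p.1, p.2, j)) :
    (∀ (rows : Fin b → Fin 2 × Fin m) (cols : Fin b → Fin n),
      Function.Injective rows → Function.Injective cols →
        (V.submatrix rows cols).det ∈ minors2 H) ∧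
      minors2 H + minorsIdeal b V = minors2 H := by
  have key : ∀ (rows : Fin b → Fin 2 × Fin m) (cols : Fin b → Fin n),
      Function.Injective rows → Function.Injective cols →
        (V.submatrix rows cols).det ∈ minors2 H := by
    intro rows cols hrows hcols
    -- two rows share the same first component
    obtain ⟨x, x', hxx', hfst⟩ :=
      Fintype.exists_ne_map_eq_of_card_lt (fun t : Fin b => (rows t).1)
        (by simpa using hb)
    rw [← Ideal.Quotient.eq_zero_iff_mem]
    set f := Ideal.Quotient.mk (minors2 H) with hf
    have hgen : ∀ (i i' : Fin m) (q q' : Fin 2 × Fin n),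
        f (H i q) * f (H i' q') = f (H i q') * f (H i' q) := by
      intro i i' q q'
      have hmem : (H i q * H i' q' - H i q' * H i' q) ∈ minors2 H :=
        Ideal.subset_span ⟨i, i', q, q', rfl⟩
      have h0 : f (H i q * H i' q' - H i q' * H i' q) = 0 :=
        Ideal.Quotient.eq_zero_iff_mem.mpr hmem
      rw [map_sub, map_mul, map_mul, sub_eq_zero] at h0
      exact h0
    -- relation in the quotient, in terms of the variables
    have hrel : ∀ (a a' : Fin 2) (i i' : Fin m) (c c' : Fin n),
        f (MvPolynomial.X (a, i, c)) * f (MvPolynomial.X (a', i', c'))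
          = f (MvPolynomial.X (a', i, c')) * f (MvPolynomial.X (a, i', c)) := by
      intro a a' i i' c c'
      have := hgen i i' (a, c) (a', c')
      simpa [hH] using this
    have hdet : f (V.submatrix rows cols).det
        = ((V.submatrix rows cols).map f).det := (RingHom.map_det f _)
    rw [hdet, Matrix.det_apply']
    set s := Equiv.swap x x' with hs
    have hse : ∀ t : Fin b, (rows (s t)).1 = (rows t).1 := by
      intro t
      rcases eq_or_ne t x with rfl | htx
      · rw [hs, Equiv.swap_apply_left]; exact hfst.symm
      rcases eq_or_ne t x' with rfl | htx'
      · rw [hs, Equiv.swap_apply_right]; exact hfst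
      · rw [hs, Equiv.swap_apply_of_ne_of_ne htx htx']
    -- key product identity
    have hprod : ∀ σ : Equiv.Perm (Fin b),
        (∏ i, ((V.submatrix rows cols).map f) ((s * σ) i) i)
          = ∏ i, ((V.submatrix rows cols).map f) (σ i) i := by
      intro σ
      have hent : ∀ (p : Fin b) (i : Fin b),
          ((V.submatrix rows cols).map f) p i
            = f (MvPolynomial.X ((rows p).1, (rows p).2, cols i)) := by
        intro p i
        simp [Matrix.map_apply, Matrix.submatrix_apply, hV]
      set i₁ := σ⁻¹ x with hi₁
      set i₂ := σ⁻¹ x' with hi₂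
      have h12 : i₁ ≠ i₂ := by
        simp only [hi₁, hi₂, ne_eq, EmbeddingLike.apply_eq_iff_eq]
        exact hxx'
      have hmem2 : i₂ ∈ (Finset.univ.erase i₁) := by
        simp [Finset.mem_erase, h12.symm]
      have expand : ∀ G : Fin b → MvPolynomial (Fin 2 × Fin m × Fin n) k ⧸ minors2 H,
          (∏ i, G i) = G i₁ * (G i₂ * ∏ i ∈ (Finset.univ.erase i₁).erase i₂, G i) := by
        intro G
        rw [Finset.mul_prod_erase _ _ hmem2, Finset.mul_prod_erase _ _ (Finset.mem_univ i₁)]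
      rw [expand, expand (fun i => ((V.submatrix rows cols).map f) (σ i) i)]
      have htail : ∀ i ∈ (Finset.univ.erase i₁).erase i₂,
          ((V.submatrix rows cols).map f) ((s * σ) i) i
            = ((V.submatrix rows cols).map f) (σ i) i := by
        intro i hi
        simp only [Finset.mem_erase] at hi
        have h1 : σ i ≠ x := fun h => hi.2.1 (by rw [hi₁, ← h, Equiv.Perm.coe_inv, Equiv.symm_apply_apply])
        have h2 : σ i ≠ x' := fun h => hi.1 (by rw [hi₂, ← h, Equiv.Perm.coe_inv, Equiv.symm_apply_apply])
        have : s (σ i) = σ i := Equiv.swap_apply_of_ne_of_ne h1 h2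
        simp [Equiv.Perm.mul_apply, this]
      rw [Finset.prod_congr rfl htail]
      -- heads
      have hσ1 : σ i₁ = x := by rw [hi₁, Equiv.Perm.coe_inv, Equiv.apply_symm_apply]
      have hσ2 : σ i₂ = x' := by rw [hi₂, Equiv.Perm.coe_inv, Equiv.apply_symm_apply]
      have hs1 : (s * σ) i₁ = x' := by
        rw [Equiv.Perm.mul_apply, hσ1, hs, Equiv.swap_apply_left]
      have hs2 : (s * σ) i₂ = x := by
        rw [Equiv.Perm.mul_apply, hσ2, hs, Equiv.swap_apply_right]
      simp only [hent, hs1, hs2, hσ1, hσ2]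
      rw [← mul_assoc, ← mul_assoc]
      congr 1
      rw [← hfst]
      have h := hrel (rows x).1 (rows x).1 (rows x').2 (rows x).2 (cols i₁) (cols i₂)
      rw [h]; ring
    refine Finset.sum_ninvolution (fun σ => s * σ) ?_ ?_ (fun _ => Finset.mem_univ _) ?_
    · intro σ
      have h1 : ((Equiv.Perm.sign (s * σ) : ℤ) : MvPolynomial (Fin 2 × Fin m × Fin n) k ⧸ minors2 H)
          = - ((Equiv.Perm.sign σ : ℤ) : MvPolynomial (Fin 2 × Fin m × Fin n) k ⧸ minors2 H) := by
        rw [Equiv.Perm.sign_mul, hs, Equiv.Perm.sign_swap hxx']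
        push_cast
        ring
      rw [hprod σ, h1]
      ring
    · intro σ _ heq
      have h := congrArg (fun τ : Equiv.Perm (Fin b) => τ (σ⁻¹ x)) heq
      simp only [Equiv.Perm.mul_apply, Equiv.Perm.coe_inv, Equiv.apply_symm_apply] at h
      rw [hs, Equiv.swap_apply_left] at h
      exact hxx' h.symm
    · intro σ
      show s * (s * σ) = σ
      rw [← mul_assoc, hs, Equiv.swap_mul_self, one_mul]
  refine ⟨key, ?_⟩
  rw [Ideal.add_eq_sup, sup_eq_left, minorsIdeal, Ideal.span_le]
  rintro p ⟨rows, cols, hr, hc, rfl⟩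
  exact key rows cols hr hc
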